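/- Serial matrix recovery (GTCS-S): Let X ∈ R^{N1×N2} be s-sparse, U1, U2 satisfy NSP_s, and Y = U1 X U2^T. Each column of Z := X U2^T is s-sparse and is the unique ℓ1-minimizer consistent with the corresponding column of Y under U1; subsequently each row of X is s-sparse and is the unique ℓ1-minimizer consistent with the corresponding row of Z under U2. Hence X is recovered exactly. -/

import Mathlib

/-- A vector is `s`-sparse if it has at most `s` nonzero entries. -/
def SparseVec {n : ℕ} (s : ℕ) (x : Fin n → ℝ) : Prop :=
  (Finset.univ.filter fun i => x i ≠ 0).card ≤ s

/-- A matrix is `s`-sparse if it has at most `s` nonzero entries in total. -/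
def SparseMat {n1 n2 : ℕ} (s : ℕ) (X : Matrix (Fin n1) (Fin n2) ℝ) : Prop :=
  (Finset.univ.filter fun p : Fin n1 × Fin n2 => X p.1 p.2 ≠ 0).card ≤ s

/-- The null space property of order `s`. -/
def NSP {m n : ℕ} (s : ℕ) (A : Matrix (Fin m) (Fin n) ℝ) : Prop :=
  ∀ w : Fin n → ℝ, A.mulVec w = 0 → w ≠ 0 →
    ∀ S : Finset (Fin n), S.card = s →
      ∑ i ∈ S, |w i| < ∑ i ∈ Sᶜ, |w i|

/-- NSP implies ℓ1-recovery uniqueness. -/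
lemma nsp_l1_unique {m n s : ℕ} (A : Matrix (Fin m) (Fin n) ℝ) (hA : NSP s A)
    (hs : s ≤ n) (x z : Fin n → ℝ) (hx : SparseVec s x)
    (hAz : A.mulVec z = A.mulVec x) (hne : z ≠ x) :
    ∑ i, |x i| < ∑ i, |z i| := by
  obtain ⟨S, hsub, hcard⟩ := Finset.exists_subsuperset_card_eq
    (Finset.subset_univ (Finset.univ.filter fun i => x i ≠ 0)) hx (by simpa using hs)
  have hx0 : ∀ i ∈ Sᶜ, x i = 0 := by
    intro i hi
    by_contra h
    exact (Finset.mem_compl.mp hi) (hsub (by simp [h]))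
  set w : Fin n → ℝ := x - z with hw
  have hw0 : A.mulVec w = 0 := by
    simp [hw, Matrix.mulVec_sub, hAz]
  have hwne : w ≠ 0 := sub_ne_zero.mpr (Ne.symm hne)
  have key := hA w hw0 hwne S hcard.2
  have h1 : ∑ i, |x i| = ∑ i ∈ S, |x i| := by
    rw [← Finset.sum_add_sum_compl S]
    have : ∑ i ∈ Sᶜ, |x i| = 0 := Finset.sum_eq_zero (by intro i hi; simp [hx0 i hi])
    linarith
  have h2 : ∑ i ∈ S, |x i| ≤ ∑ i ∈ S, |z i| + ∑ i ∈ S, |w i| := by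
    rw [← Finset.sum_add_distrib]
    apply Finset.sum_le_sum
    intro i _
    have : x i = z i + w i := by simp [hw]
    rw [this]
    exact abs_add_le _ _
  have h3 : ∑ i ∈ Sᶜ, |w i| = ∑ i ∈ Sᶜ, |z i| := by
    apply Finset.sum_congr rfl
    intro i hi
    simp [hw, hx0 i hi]
  have h4 : ∑ i, |z i| = ∑ i ∈ S, |z i| + ∑ i ∈ Sᶜ, |z i| :=
    (Finset.sum_add_sum_compl S _).symm
  linarith

theorem gtcs_s_matrix_recovery {N1 N2 m1 m2 s : ℕ}
    (hs1 : s ≤ N1) (hs2 : s ≤ N2)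
    (X : Matrix (Fin N1) (Fin N2) ℝ) (hX : SparseMat s X)
    (U1 : Matrix (Fin m1) (Fin N1) ℝ) (U2 : Matrix (Fin m2) (Fin N2) ℝ)
    (hU1 : NSP s U1) (hU2 : NSP s U2) :
    (∀ q : Fin m2,
      SparseVec s (fun i => (X * U2.transpose) i q) ∧
      ∀ z : Fin N1 → ℝ,
        U1.mulVec z = (fun p => (U1 * X * U2.transpose) p q) →
        z ≠ (fun i => (X * U2.transpose) i q) →
        ∑ i, |(X * U2.transpose) i q| < ∑ i, |z i|) ∧
    (∀ p : Fin N1,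
      SparseVec s (fun j => X p j) ∧
      ∀ u : Fin N2 → ℝ,
        U2.mulVec u = (fun q => (X * U2.transpose) p q) →
        u ≠ (fun j => X p j) →
        ∑ j, |X p j| < ∑ j, |u j|) := by
  constructor
  · intro q
    have hcolsp : SparseVec s (fun i => (X * U2.transpose) i q) := by
      unfold SparseVec
      refine le_trans ?_ hX
      calc (Finset.univ.filter fun i => (X * U2.transpose) i q ≠ 0).card
          ≤ ((Finset.univ.filter fun p : Fin N1 × Fin N2 => X p.1 p.2 ≠ 0).image Prod.fst).card := by
            apply Finset.card_le_card
            intro i hi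
            simp only [Finset.mem_filter, Finset.mem_univ, true_and] at hi
            have : ∃ j, X i j ≠ 0 := by
              by_contra h
              push_neg at h
              exact hi (by simp [Matrix.mul_apply, h])
            obtain ⟨j, hj⟩ := this
            exact Finset.mem_image.mpr ⟨(i, j), by simp [hj], rfl⟩
        _ ≤ _ := Finset.card_image_le
    refine ⟨hcolsp, ?_⟩
    intro z hz hne
    apply nsp_l1_unique U1 hU1 hs1 _ _ hcolsp _ hne
    rw [hz]
    funext p
    simp only [Matrix.mulVec, dotProduct, Matrix.mul_apply, Matrix.transpose_apply,
      Finset.mul_sum, Finset.sum_mul]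
    rw [Finset.sum_comm]
    apply Finset.sum_congr rfl
    intro i _
    apply Finset.sum_congr rfl
    intro j _
    ring
  · intro p
    have hrowsp : SparseVec s (fun j => X p j) := by
      unfold SparseVec
      refine le_trans ?_ hX
      apply Finset.card_le_card_of_injOn (fun j => (p, j))
      · intro j hj
        simp only [Finset.mem_coe, Finset.mem_filter, Finset.mem_univ, true_and] at hj ⊢
        exact hj
      · intro a _ b _ hab
        exact congrArg Prod.snd hab
    refine ⟨hrowsp, ?_⟩
    intro u hu hne
    apply nsp_l1_unique U2 hU2 hs2 _ _ hrowsp _ hne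
    rw [hu]
    funext q
    simp [Matrix.mulVec, dotProduct, Matrix.mul_apply, mul_comm]
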